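/- Let η : m → g and μ : n → g be crossed modules of Leibniz algebras. Then the subspace m □ n of the non-abelian tensor product m ⋆ n generated by all elements m * n' − n * m' with η(m) = μ(n) and η(m') = μ(n') is contained in the center of m ⋆ n; in particular, it is a two-sided ideal of m ⋆ n. -/
import Mathlib


universe u v w

/-- The Leibniz identity for a bilinear bracket. -/
def LeibnizId {K : Type u} [Field K] {L : Type*} [AddCommGroup L] [Module K L]
    (b : L →ₗ[K] L →ₗ[K] L) : Prop :=
  ∀ x y z : L, b x (b y z) = b (b x y) z - b (b x z) y

/-- A linear map preserving the brackets. -/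
def IsLeibnizHom {K : Type u} [Field K] {L M : Type*} [AddCommGroup L] [Module K L]
    [AddCommGroup M] [Module K M]
    (bL : L →ₗ[K] L →ₗ[K] L) (bM : M →ₗ[K] M →ₗ[K] M) (f : L →ₗ[K] M) : Prop :=
  ∀ x y : L, f (bL x y) = bM (f x) (f y)

/-- A two-sided ideal of a Leibniz algebra. -/
def IsLeibnizIdeal {K : Type u} [Field K] {L : Type*} [AddCommGroup L] [Module K L]
    (b : L →ₗ[K] L →ₗ[K] L) (S : Submodule K L) : Prop :=
  ∀ a ∈ S, ∀ x : L, b a x ∈ S ∧ b x a ∈ S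

/-- A Leibniz action of a Leibniz algebra `M` on a Leibniz algebra `N`: a pair of
bilinear maps `l : M × N → N`, `(m,n) ↦ ᵐn` and `r : N × M → N`, `(n,m) ↦ nᵐ`
satisfying the six axioms. -/
def IsLeibnizAction {K : Type u} [Field K] {M N : Type*}
    [AddCommGroup M] [Module K M] [AddCommGroup N] [Module K N]
    (bM : M →ₗ[K] M →ₗ[K] M) (bN : N →ₗ[K] N →ₗ[K] N)
    (l : M →ₗ[K] N →ₗ[K] N) (r : N →ₗ[K] M →ₗ[K] N) : Prop :=
  (∀ (m m' : M) (n : N), l (bM m m') n = l m (l m' n) + r (l m n) m') ∧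
  (∀ (m : M) (n n' : N), l m (bN n n') = bN (l m n) n' - bN (l m n') n) ∧
  (∀ (n : N) (m m' : M), r n (bM m m') = r (r n m) m' - r (r n m') m) ∧
  (∀ (n n' : N) (m : M), r (bN n n') m = bN (r n m) n' + bN n (r n' m)) ∧
  (∀ (m m' : M) (n : N), l m (l m' n) = - l m (r n m')) ∧
  (∀ (n : N) (m : M) (n' : N), bN n (l m n') = - bN n (r n' m))

/-- A Leibniz crossed module: a Leibniz homomorphism `η : M → G` together with a Leibniz
action of `G` on `M` satisfying the crossed module axioms. -/
def IsCrossedModule {K : Type u} [Field K] {M G : Type*}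
    [AddCommGroup M] [Module K M] [AddCommGroup G] [Module K G]
    (bM : M →ₗ[K] M →ₗ[K] M) (bG : G →ₗ[K] G →ₗ[K] G)
    (η : M →ₗ[K] G) (l : G →ₗ[K] M →ₗ[K] M) (r : M →ₗ[K] G →ₗ[K] M) : Prop :=
  IsLeibnizHom bM bG η ∧ IsLeibnizAction bG bM l r ∧
  (∀ (x : G) (m : M), η (l x m) = bG x (η m)) ∧
  (∀ (m : M) (x : G), η (r m x) = bG (η m) x) ∧
  (∀ m₁ m₂ : M, l (η m₁) m₂ = bM m₁ m₂) ∧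
  (∀ m₁ m₂ : M, r m₁ (η m₂) = bM m₁ m₂)

/-- The defining relations (3a)–(5d) of the non-abelian tensor product `M ⋆ N` of two
Leibniz algebras acting on one another, for a candidate pair of bilinear maps
`p : M × N → T` (`(m,n) ↦ m*n`) and `q : N × M → T` (`(n,m) ↦ n*m`) into a Leibniz
algebra `(T, bT)`.  Here `lact m n = ᵐn`, `ract n m = nᵐ`, `lact' n m = ⁿm`,
`ract' m n = mⁿ`. -/
def TensorRel {K : Type u} [Field K] {M N T : Type*}
    [AddCommGroup M] [Module K M] [AddCommGroup N] [Module K N]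
    [AddCommGroup T] [Module K T]
    (bM : M →ₗ[K] M →ₗ[K] M) (bN : N →ₗ[K] N →ₗ[K] N)
    (lact : M →ₗ[K] N →ₗ[K] N) (ract : N →ₗ[K] M →ₗ[K] N)
    (lact' : N →ₗ[K] M →ₗ[K] M) (ract' : M →ₗ[K] N →ₗ[K] M)
    (bT : T →ₗ[K] T →ₗ[K] T)
    (p : M →ₗ[K] N →ₗ[K] T) (q : N →ₗ[K] M →ₗ[K] T) : Prop :=
  (∀ (m : M) (n n' : N), p m (bN n n') = p (ract' m n) n' - p (ract' m n') n) ∧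
  (∀ (n : N) (m m' : M), q n (bM m m') = q (ract n m) m' - q (ract n m') m) ∧
  (∀ (m m' : M) (n : N), p (bM m m') n = q (lact m n) m' - p m (ract n m')) ∧
  (∀ (n n' : N) (m : M), q (bN n n') m = p (lact' n m) n' - q n (ract' m n')) ∧
  (∀ (m m' : M) (n : N), p m (lact m' n) = - p m (ract n m')) ∧
  (∀ (n n' : N) (m : M), q n (lact' n' m) = - q n (ract' m n')) ∧
  (∀ (m : M) (n : N) (m' : M) (n' : N),
      bT (p m n) (p m' n') = p (ract' m n) (lact m' n') ∧
      bT (p m n) (p m' n') = q (lact m n) (ract' m' n')) ∧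
  (∀ (n : N) (m : M) (n' : N) (m' : M),
      bT (q n m) (q n' m') = p (lact' n m) (ract n' m') ∧
      bT (q n m) (q n' m') = q (ract n m) (lact' n' m')) ∧
  (∀ (m : M) (n : N) (n' : N) (m' : M),
      bT (p m n) (q n' m') = p (ract' m n) (ract n' m') ∧
      bT (p m n) (q n' m') = q (lact m n) (lact' n' m')) ∧
  (∀ (n : N) (m : M) (m' : M) (n' : N),
      bT (q n m) (p m' n') = p (lact' n m) (lact m' n') ∧
      bT (q n m) (p m' n') = q (ract n m) (ract' m' n'))

/-- `T` is generated (as a vector space) by the elements `m*n` and `n*m`. -/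
def TensorGen {K : Type u} [Field K] {M N T : Type*}
    [AddCommGroup M] [Module K M] [AddCommGroup N] [Module K N]
    [AddCommGroup T] [Module K T]
    (p : M →ₗ[K] N →ₗ[K] T) (q : N →ₗ[K] M →ₗ[K] T) : Prop :=
  Submodule.span K
    (Set.range (fun z : M × N => p z.1 z.2) ∪ Set.range (fun z : N × M => q z.1 z.2)) = ⊤

/-- `(T, bT, p, q)` is a realization of the quotient of the non-abelian tensor product
`M ⋆ N` by the additional relations `p z.1.1 z.1.2 = q z.2.1 z.2.2` for `z ∈ Sq`:
it is a Leibniz algebra satisfying all the relations, is generated by the canonical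
generators, and is universal among all such.  Taking `Sq = ∅` gives the non-abelian
tensor product itself; a suitable choice of `Sq` gives the non-abelian exterior
product `M ⋏ N`. -/
def IsExtProd.{w₀} {K : Type u} [Field K] {M N : Type*}
    [AddCommGroup M] [Module K M] [AddCommGroup N] [Module K N]
    {T : Type*} [AddCommGroup T] [Module K T]
    (bM : M →ₗ[K] M →ₗ[K] M) (bN : N →ₗ[K] N →ₗ[K] N)
    (lact : M →ₗ[K] N →ₗ[K] N) (ract : N →ₗ[K] M →ₗ[K] N)
    (lact' : N →ₗ[K] M →ₗ[K] M) (ract' : M →ₗ[K] N →ₗ[K] M)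
    (Sq : Set ((M × N) × (N × M)))
    (bT : T →ₗ[K] T →ₗ[K] T)
    (p : M →ₗ[K] N →ₗ[K] T) (q : N →ₗ[K] M →ₗ[K] T) : Prop :=
  LeibnizId bT ∧ TensorRel bM bN lact ract lact' ract' bT p q ∧
  (∀ z ∈ Sq, p z.1.1 z.1.2 = q z.2.1 z.2.2) ∧
  TensorGen p q ∧
  ∀ (T' : Type w₀) [AddCommGroup T'] [Module K T']
    (bT' : T' →ₗ[K] T' →ₗ[K] T')
    (p' : M →ₗ[K] N →ₗ[K] T') (q' : N →ₗ[K] M →ₗ[K] T'),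
    LeibnizId bT' → TensorRel bM bN lact ract lact' ract' bT' p' q' →
    (∀ z ∈ Sq, p' z.1.1 z.1.2 = q' z.2.1 z.2.2) →
    ∃ φ : T →ₗ[K] T', IsLeibnizHom bT bT' φ ∧
      (∀ (m : M) (n : N), φ (p m n) = p' m n) ∧ (∀ (n : N) (m : M), φ (q n m) = q' n m)

/-- Realization of the non-abelian tensor product `M ⋆ N`. -/
def IsTensorProd.{w'} {K : Type u} [Field K] {M N : Type*}
    [AddCommGroup M] [Module K M] [AddCommGroup N] [Module K N]
    {T : Type*} [AddCommGroup T] [Module K T]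
    (bM : M →ₗ[K] M →ₗ[K] M) (bN : N →ₗ[K] N →ₗ[K] N)
    (lact : M →ₗ[K] N →ₗ[K] N) (ract : N →ₗ[K] M →ₗ[K] N)
    (lact' : N →ₗ[K] M →ₗ[K] M) (ract' : M →ₗ[K] N →ₗ[K] M)
    (bT : T →ₗ[K] T →ₗ[K] T)
    (p : M →ₗ[K] N →ₗ[K] T) (q : N →ₗ[K] M →ₗ[K] T) : Prop :=
  IsExtProd.{u, w'} bM bN lact ract lact' ract' ∅ bT p q

/-- Let `η : M → G` and `μ : N → G` be Leibniz crossed modules, with the induced mutual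
actions of `M` and `N` on each other via `G`, and let `T = M ⋆ N` be the non-abelian
tensor product.  Then the subspace `M □ N` generated by the elements `m*n' - n*m'` with
`η m = μ n` and `η m' = μ n'` is contained in the center of `M ⋆ N`; in particular it is
a two-sided ideal of `M ⋆ N`. -/
theorem square_sub_center_of_tensor {K : Type u} [Field K]
    {G M N T : Type*} [AddCommGroup G] [Module K G] [AddCommGroup M] [Module K M]
    [AddCommGroup N] [Module K N] [AddCommGroup T] [Module K T]
    (bG : G →ₗ[K] G →ₗ[K] G) (bM : M →ₗ[K] M →ₗ[K] M) (bN : N →ₗ[K] N →ₗ[K] N)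
    (hbG : LeibnizId bG) (hbM : LeibnizId bM) (hbN : LeibnizId bN)
    (η : M →ₗ[K] G) (μ : N →ₗ[K] G)
    (lM : G →ₗ[K] M →ₗ[K] M) (rM : M →ₗ[K] G →ₗ[K] M)
    (lN : G →ₗ[K] N →ₗ[K] N) (rN : N →ₗ[K] G →ₗ[K] N)
    (hM : IsCrossedModule bM bG η lM rM) (hN : IsCrossedModule bN bG μ lN rN)
    (bT : T →ₗ[K] T →ₗ[K] T) (p : M →ₗ[K] N →ₗ[K] T) (q : N →ₗ[K] M →ₗ[K] T)
    (hT : IsTensorProd bM bN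
      (lN ∘ₗ η) ((rN.flip ∘ₗ η).flip) (lM ∘ₗ μ) ((rM.flip ∘ₗ μ).flip) bT p q) :
    (∀ (m m' : M) (n n' : N), η m = μ n → η m' = μ n' →
      ∀ t : T, bT t (p m n' - q n m') = 0 ∧ bT (p m n' - q n m') t = 0) ∧
    IsLeibnizIdeal bT (Submodule.span K
      {z : T | ∃ (m m' : M) (n n' : N), η m = μ n ∧ η m' = μ n' ∧ z = p m n' - q n m'}) := by
  obtain ⟨hLeib, hRel, -, hGen, -⟩ := hT
  obtain ⟨r1, r2, r3, r4, r5, r6, r7, r8, r9, r10⟩ := hRel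
  obtain ⟨hMhom, hMact, hM3, hM4, hM5, hM6⟩ := hM
  obtain ⟨hNhom, hNact, hN3, hN4, hN5, hN6⟩ := hN
  have key : ∀ (m m' : M) (n n' : N), η m = μ n → η m' = μ n' →
      ∀ t : T, bT t (p m n' - q n m') = 0 ∧ bT (p m n' - q n m') t = 0 := by
    intro m m' n n' h h' t
    have hsets : (⊤ : Submodule K T) ≤
        LinearMap.ker (bT.flip (p m n' - q n m')) ⊓ LinearMap.ker (bT (p m n' - q n m')) := by
      rw [← hGen]
      apply Submodule.span_le.mpr
      rintro x (⟨⟨a, b⟩, rfl⟩ | ⟨⟨b, a⟩, rfl⟩)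
      · simp only [SetLike.mem_coe, Submodule.mem_inf, LinearMap.mem_ker,
          LinearMap.flip_apply, map_sub, LinearMap.sub_apply]
        constructor
        · rw [(r7 a b m n').1, (r9 a b n m').1]
          simp [LinearMap.comp_apply, LinearMap.flip_apply, h, h', hN5, hN6]
        · rw [(r7 m n' a b).1, (r10 n m' a b).1]
          simp [LinearMap.comp_apply, LinearMap.flip_apply, ← h, ← h', hM5, hM6]
      · simp only [SetLike.mem_coe, Submodule.mem_inf, LinearMap.mem_ker,
          LinearMap.flip_apply, map_sub, LinearMap.sub_apply]
        constructor
        · rw [(r10 b a m n').1, (r8 b a n m').1]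
          simp [LinearMap.comp_apply, LinearMap.flip_apply, h, h', hN5, hN6]
        · rw [(r9 m n' b a).1, (r8 n m' b a).1]
          simp [LinearMap.comp_apply, LinearMap.flip_apply, ← h, ← h', hM5, hM6]
    have ht := Submodule.mem_inf.mp (hsets (Submodule.mem_top (x := t)))
    exact ⟨ht.1, ht.2⟩
  refine ⟨key, ?_⟩
  intro a ha x
  have hz : ∀ t : T, bT t a = 0 ∧ bT a t = 0 := by
    have hle : Submodule.span K
        {z : T | ∃ (m m' : M) (n n' : N), η m = μ n ∧ η m' = μ n' ∧ z = p m n' - q n m'} ≤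
        ⨅ t : T, LinearMap.ker (bT t) ⊓ LinearMap.ker (bT.flip t) := by
      apply Submodule.span_le.mpr
      rintro z ⟨m, m', n, n', h, h', rfl⟩
      simp only [SetLike.mem_coe, Submodule.mem_iInf, Submodule.mem_inf, LinearMap.mem_ker,
        LinearMap.flip_apply]
      intro t
      exact key m m' n n' h h' t
    have := hle ha
    simp only [Submodule.mem_iInf, Submodule.mem_inf, LinearMap.mem_ker,
      LinearMap.flip_apply] at this
    exact this
  have h1 := (hz x).2
  have h2 := (hz x).1
  rw [h1, h2]
  exact ⟨Submodule.zero_mem _, Submodule.zero_mem _⟩
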